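/- Suppose that the only vector z ∈ ℂ^L with B_i z = 0 for all i = 1,…,N is z = 0. Then the matrix D = Σ_{i=1}^{N} (1/σ_i²) B_i^H B_i − (1/a) (Σ_{i=1}^{N} (x_i^*/σ_i²) B_i)^H (Σ_{i=1}^{N} (x_i^*/σ_i²) B_i) is positive definite, i.e., z^H D z is a positive real number for every nonzero z ∈ ℂ^L. (Appendix B of the paper, proved via the Cauchy–Schwarz inequality; this is the claimed positive-definiteness of D_n in the scalar-covariance case.) -/

import Mathlib

open Matrix BigOperators
open scoped ComplexOrder

private lemma quadForm_conjTranspose_mul_self {Nr L : ℕ}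
    (A : Matrix (Fin Nr) (Fin L) ℂ) (z : Fin L → ℂ) :
    star z ⬝ᵥ ((Aᴴ * A) *ᵥ z) = ((∑ j, Complex.normSq ((A *ᵥ z) j) : ℝ) : ℂ) := by
  rw [← mulVec_mulVec, dotProduct_mulVec, ← star_mulVec]
  simp [dotProduct, Complex.normSq_eq_conj_mul_self]

private lemma sum_mulVec' {N Nr L : ℕ} (s : Finset (Fin N))
    (M : Fin N → Matrix (Fin Nr) (Fin L) ℂ) (z : Fin L → ℂ) :
    (∑ i ∈ s, M i) *ᵥ z = ∑ i ∈ s, M i *ᵥ z := by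
  induction s using Finset.induction with
  | empty => simp
  | insert _ _ h ih => simp [Finset.sum_insert h, add_mulVec, ih]

private lemma dotProduct_sum' {N Nr : ℕ} (v : Fin Nr → ℂ) (s : Finset (Fin N))
    (w : Fin N → (Fin Nr → ℂ)) :
    v ⬝ᵥ (∑ i ∈ s, w i) = ∑ i ∈ s, v ⬝ᵥ w i := by
  induction s using Finset.induction with
  | empty => simp
  | insert _ _ h ih => simp [Finset.sum_insert h, dotProduct_add, ih]

private lemma cs_norm {N Nr : ℕ} (c : Fin N → ℂ) (u : Fin N → EuclideanSpace ℂ (Fin Nr)) :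
    ‖∑ i, c i • u i‖ ^ 2 ≤ (∑ i, ‖c i‖ ^ 2) * ∑ i, ‖u i‖ ^ 2 := by
  calc ‖∑ i, c i • u i‖ ^ 2 ≤ (∑ i, ‖c i‖ * ‖u i‖) ^ 2 := by
        apply pow_le_pow_left₀ (norm_nonneg _)
        exact (norm_sum_le _ _).trans (le_of_eq (by simp [norm_smul]))
    _ ≤ (∑ i, ‖c i‖ ^ 2) * ∑ i, ‖u i‖ ^ 2 := Finset.sum_mul_sq_le_sq_mul_sq _ _ _

private lemma normSq_sum_eq_norm_sq {Nr : ℕ} (v : EuclideanSpace ℂ (Fin Nr)) :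
    ∑ j, Complex.normSq (v j) = ‖v‖ ^ 2 := by
  rw [EuclideanSpace.norm_eq, Real.sq_sqrt (by positivity)]
  simp [Complex.sq_norm]

theorem appendixB_D_posDef
    (Nr L N : ℕ) (hNr : 0 < Nr) (hL : 0 < L) (hN : 0 < N)
    (σ : Fin N → ℝ) (hσ : ∀ i, 0 < σ i)
    (x : Fin N → ℂ)
    (B : Fin N → Matrix (Fin Nr) (Fin L) ℂ)
    (a : ℝ) (ha : a = 1 + ∑ i, Complex.normSq (x i) / (σ i) ^ 2)
    (D : Matrix (Fin L) (Fin L) ℂ)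
    (hD : D = (∑ i, ((1 / (σ i) ^ 2 : ℝ) : ℂ) • ((B i)ᴴ * B i))
        - ((1 / a : ℝ) : ℂ) •
            ((∑ i, ((starRingEnd ℂ) (x i) / (((σ i) ^ 2 : ℝ) : ℂ)) • B i)ᴴ
              * (∑ i, ((starRingEnd ℂ) (x i) / (((σ i) ^ 2 : ℝ) : ℂ)) • B i)))
    (hinj : ∀ z : Fin L → ℂ, (∀ i, B i *ᵥ z = 0) → z = 0) :
    D.PosDef := by
  have ha0 : 1 ≤ a := by
    rw [ha]
    have : (0:ℝ) ≤ ∑ i, Complex.normSq (x i) / σ i ^ 2 :=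
      Finset.sum_nonneg fun i _ => div_nonneg (Complex.normSq_nonneg _) (by positivity)
    linarith
  have hapos : (0:ℝ) < a := lt_of_lt_of_le one_pos ha0
  refine posDef_iff_dotProduct_mulVec.mpr ⟨?_, ?_⟩
  · -- Hermitian
    rw [hD]
    simp [Matrix.IsHermitian, conjTranspose_sub, conjTranspose_smul, conjTranspose_sum,
      conjTranspose_mul, Complex.star_def, Complex.conj_ofReal]
  · intro z hz
    set c : Fin N → ℂ := fun i => (starRingEnd ℂ) (x i) / (((σ i) ^ 2 : ℝ) : ℂ) with hc
    set M : Matrix (Fin Nr) (Fin L) ℂ := ∑ i, c i • B i with hM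
    set u : Fin N → (Fin Nr → ℂ) := fun i => B i *ᵥ z with hu
    set Q : (Fin Nr → ℂ) → ℝ := fun v => ∑ j, Complex.normSq (v j) with hQ
    set S : ℝ := ∑ i, (1 / σ i ^ 2) * Q (u i) with hS
    have hw : M *ᵥ z = ∑ i, c i • u i := by
      rw [hM, sum_mulVec']
      simp [smul_mulVec, hu]
    -- quadratic form value
    have hval : star z ⬝ᵥ (D *ᵥ z) = ((S - (1/a) * Q (M *ᵥ z) : ℝ) : ℂ) := by
      rw [hD, sub_mulVec, dotProduct_sub, sum_mulVec', dotProduct_sum', smul_mulVec,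
        dotProduct_smul, quadForm_conjTranspose_mul_self]
      simp only [smul_mulVec, dotProduct_smul, quadForm_conjTranspose_mul_self,
        smul_eq_mul]
      push_cast [hS, hQ, hu]
      ring
    rw [hval]
    -- positivity of S
    have hQnonneg : ∀ v, 0 ≤ Q v := fun v => Finset.sum_nonneg fun j _ => Complex.normSq_nonneg _
    have hSpos : 0 < S := by
      obtain ⟨i, hi⟩ : ∃ i, u i ≠ 0 := by
        by_contra h
        push_neg at h
        exact hz (hinj z fun i => h i)
      have hQi : 0 < Q (u i) := by
        obtain ⟨j, hj⟩ := Function.ne_iff.mp hi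
        exact Finset.sum_pos' (fun j _ => Complex.normSq_nonneg _)
          ⟨j, Finset.mem_univ j, Complex.normSq_pos.mpr hj⟩
      refine Finset.sum_pos' (fun i _ => mul_nonneg (by positivity) (hQnonneg _))
        ⟨i, Finset.mem_univ i, ?_⟩
      exact mul_pos (one_div_pos.mpr (pow_pos (hσ i) 2)) hQi
    -- Cauchy-Schwarz
    have hCS : Q (M *ᵥ z) ≤ (a - 1) * S := by
      set c' : Fin N → ℂ := fun i => (starRingEnd ℂ) (x i) / ((σ i : ℝ) : ℂ) with hc'
      set u' : Fin N → EuclideanSpace ℂ (Fin Nr) := fun i => (((σ i)⁻¹ : ℝ) : ℂ) • WithLp.toLp 2 (u i) with hu'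
      have hweq : M *ᵥ z = ∑ i, c' i • u' i := by
        rw [hw, WithLp.ofLp_sum]
        refine Finset.sum_congr rfl fun i _ => ?_
        rw [hu', smul_smul, WithLp.ofLp_smul, WithLp.ofLp_toLp]
        congr 1
        have hσi : ((σ i : ℝ) : ℂ) ≠ 0 := by
          simp [Complex.ofReal_ne_zero, (hσ i).ne']
        rw [hc, hc']
        push_cast
        ring
      have hc'sum : ∑ i, ‖c' i‖ ^ 2 = a - 1 := by
        have : ∀ i, ‖c' i‖ ^ 2 = Complex.normSq (x i) / σ i ^ 2 := by
          intro i
          rw [hc', norm_div, div_pow]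
          congr 1
          · rw [RCLike.norm_conj]
            exact Complex.sq_norm (x i)
          · rw [Complex.norm_real, Real.norm_eq_abs, sq_abs]
        simp only [this]
        rw [ha]
        ring
      have hu'sum : ∑ i, ‖u' i‖ ^ 2 = S := by
        have : ∀ i, ‖u' i‖ ^ 2 = (1 / σ i ^ 2) * Q (u i) := by
          intro i
          rw [hu', norm_smul, mul_pow, Complex.norm_real, Real.norm_eq_abs, sq_abs, hQ]
          simp only []
          rw [normSq_sum_eq_norm_sq (WithLp.toLp 2 (u i))]
          field_simp
        simp only [this]
        exact hS.symm
      calc Q (M *ᵥ z) = ∑ j, Complex.normSq ((∑ i, c' i • u' i) j) := by rw [hQ, hweq]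
        _ = ‖∑ i, c' i • u' i‖ ^ 2 := normSq_sum_eq_norm_sq _
        _ ≤ (∑ i, ‖c' i‖ ^ 2) * ∑ i, ‖u' i‖ ^ 2 := cs_norm c' u'
        _ = (a - 1) * S := by rw [hc'sum, hu'sum]
    -- conclude
    have hfinal : 0 < S - (1/a) * Q (M *ᵥ z) := by
      have h2 : 0 < a * S - Q (M *ᵥ z) := by nlinarith [hSpos, hCS]
      have h3 : S - (1/a) * Q (M *ᵥ z) = (a * S - Q (M *ᵥ z)) / a := by
        field_simp
      rw [h3]
      exact div_pos h2 hapos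
    exact Complex.zero_lt_real.mpr hfinal
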